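/- Termination under flooding (set-theoretic core of the cooperative-termination theorem): Let X be a compact topological space, let n : ℕ, and for each robot r ∈ Fin n let K(r) : ℕ → Set X denote the region robot r knows to be explored, where each K(r) is monotone in time (t ≤ t' implies K(r)(t) ⊆ K(r)(t')). Assume exploration flooding: for all robots r, r' and every time t there exists t' ≥ t with K(r)(t) ⊆ K(r')(t'). Assume exploration liveness for distributed knowledge: there is a collection 𝒰 of open subsets of X with ⋃ 𝒰 = X such that for every U ∈ 𝒰 there exists a time t with U ⊆ ⋃_{r ∈ Fin n} K(r)(t). Then there exists a time T such that K(r)(T) = X for every robot r ∈ Fin n, i.e. eventually every robot knows the whole space is explored. -/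
import Mathlib


/-- Termination under flooding: over a compact space, with monotone knowledge,
exploration flooding, and exploration liveness for distributed knowledge, eventually
every robot knows the whole space to be explored. -/
theorem termination_under_flooding {X : Type*} [TopologicalSpace X] [CompactSpace X]
    (n : ℕ) (K : Fin n → ℕ → Set X)
    (hmono : ∀ (r : Fin n) (t t' : ℕ), t ≤ t' → K r t ⊆ K r t')
    (hflood : ∀ (r r' : Fin n) (t : ℕ), ∃ t' : ℕ, t ≤ t' ∧ K r t ⊆ K r' t')
    (hlive : ∃ 𝒰 : Set (Set X), (∀ U ∈ 𝒰, IsOpen U) ∧ ⋃₀ 𝒰 = Set.univ ∧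
      ∀ U ∈ 𝒰, ∃ t : ℕ, U ⊆ ⋃ r : Fin n, K r t) :
    ∃ T : ℕ, ∀ r : Fin n, K r T = Set.univ := by
  classical
  obtain ⟨𝒰, hopen, hcov, hsub⟩ := hlive
  -- Step 1: a time t0 at which distributed knowledge is everything
  have hcover : Set.univ ⊆ ⋃ U : 𝒰, (U : Set X) := by
    rw [← hcov]; intro x hx
    obtain ⟨U, hU, hxU⟩ := hx
    exact Set.mem_iUnion.2 ⟨⟨U, hU⟩, hxU⟩
  obtain ⟨s, hs⟩ := isCompact_univ.elim_finite_subcover (fun U : 𝒰 => (U : Set X))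
    (fun U => hopen U U.2) hcover
  set tU : 𝒰 → ℕ := fun U => (hsub U U.2).choose with htU
  set t0 : ℕ := s.sup tU with ht0
  have hdist : ∀ x : X, ∃ r : Fin n, x ∈ K r t0 := by
    intro x
    obtain ⟨U, hUs, hxU⟩ := Set.mem_iUnion₂.1 (hs (Set.mem_univ x))
    have := (hsub U U.2).choose_spec hxU
    obtain ⟨r, hr⟩ := Set.mem_iUnion.1 this
    exact ⟨r, hmono r (tU U) t0 (Finset.le_sup hUs) hr⟩
  -- Step 2: flooding gives each robot everything
  set Tr : Fin n → ℕ := fun r' => Finset.univ.sup (fun r => (hflood r r' t0).choose) with hTr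
  refine ⟨Finset.univ.sup Tr, fun r' => ?_⟩
  apply Set.eq_univ_of_forall
  intro x
  obtain ⟨r, hr⟩ := hdist x
  have h1 := (hflood r r' t0).choose_spec.2 hr
  have h2a : (hflood r r' t0).choose ≤ Tr r' :=
    Finset.le_sup (f := fun r => (hflood r r' t0).choose) (Finset.mem_univ r)
  have h2b : Tr r' ≤ Finset.univ.sup Tr := Finset.le_sup (Finset.mem_univ r')
  have h2 : (hflood r r' t0).choose ≤ Finset.univ.sup Tr := le_trans h2a h2b
  exact hmono r' _ _ h2 h1
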